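/- Let p be a real polynomial with deg p ≤ 3 and r a real polynomial with deg r ≤ 1 such that r(0) = 0, r'(0) = 0, p'''(1) = 0, p''(1) = 0, ∫₀¹ p'(x) dx = 0, and ∫₀¹ p(x) dx = 0. Then p = 0 and r = 0. (This is the uniqueness of the projection pair in Case II (q = 3) of Lemma 2 for the alternating flux.) -/

import Mathlib

open Polynomial

lemma poly_as_sum (p : Polynomial ℝ) (hpdeg : p.degree ≤ 3) :
    p = C (p.coeff 0) + C (p.coeff 1) * X + C (p.coeff 2) * X ^ 2 + C (p.coeff 3) * X ^ 3 := by
  have h : p.natDegree < 4 := by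
    rcases eq_or_ne p 0 with rfl | h0
    · simp
    · have := (Polynomial.natDegree_le_iff_degree_le (n := 3)).2 hpdeg
      omega
  rw [Polynomial.as_sum_range' p 4 h]
  simp [Finset.sum_range_succ, ← Polynomial.C_mul_X_pow_eq_monomial]

lemma int_aux1 (a b c : ℝ) :
    (∫ x in (0:ℝ)..1, (a + b * (2 * x) + c * (3 * x ^ 2))) = a + b + c := by
  have h1 : IntervalIntegrable (fun x : ℝ => a + b * (2 * x)) MeasureTheory.volume 0 1 :=
    Continuous.intervalIntegrable (by continuity) _ _
  have h2 : IntervalIntegrable (fun x : ℝ => c * (3 * x ^ 2)) MeasureTheory.volume 0 1 :=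
    Continuous.intervalIntegrable (by continuity) _ _
  have h3 : IntervalIntegrable (fun _ : ℝ => a) MeasureTheory.volume 0 1 :=
    Continuous.intervalIntegrable (by continuity) _ _
  have h4 : IntervalIntegrable (fun x : ℝ => b * (2 * x)) MeasureTheory.volume 0 1 :=
    Continuous.intervalIntegrable (by continuity) _ _
  rw [intervalIntegral.integral_add h1 h2, intervalIntegral.integral_add h3 h4]
  simp [intervalIntegral.integral_const_mul, integral_pow, mul_comm]
  ring

lemma int_aux0 (a b c d : ℝ) :
    (∫ x in (0:ℝ)..1, (a + b * x + c * x ^ 2 + d * x ^ 3)) = a + b / 2 + c / 3 + d / 4 := by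
  have h1 : IntervalIntegrable (fun x : ℝ => a + b * x + c * x ^ 2) MeasureTheory.volume 0 1 :=
    Continuous.intervalIntegrable (by continuity) _ _
  have h2 : IntervalIntegrable (fun x : ℝ => d * x ^ 3) MeasureTheory.volume 0 1 :=
    Continuous.intervalIntegrable (by continuity) _ _
  have h3 : IntervalIntegrable (fun x : ℝ => a + b * x) MeasureTheory.volume 0 1 :=
    Continuous.intervalIntegrable (by continuity) _ _
  have h4 : IntervalIntegrable (fun x : ℝ => c * x ^ 2) MeasureTheory.volume 0 1 :=
    Continuous.intervalIntegrable (by continuity) _ _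
  have h5 : IntervalIntegrable (fun _ : ℝ => a) MeasureTheory.volume 0 1 :=
    Continuous.intervalIntegrable (by continuity) _ _
  have h6 : IntervalIntegrable (fun x : ℝ => b * x) MeasureTheory.volume 0 1 :=
    Continuous.intervalIntegrable (by continuity) _ _
  rw [intervalIntegral.integral_add h1 h2, intervalIntegral.integral_add h3 h4,
      intervalIntegral.integral_add h5 h6]
  have : (∫ x in (0:ℝ)..1, b * x) = b / 2 := by
    rw [intervalIntegral.integral_const_mul, integral_id]; ring
  simp [intervalIntegral.integral_const_mul, integral_pow, this]
  ring

/-- Uniqueness of the projection pair in Case II (`q = 3`) of Lemma 2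
for the alternating flux. -/
theorem projection_pair_unique_q3
    (p r : Polynomial ℝ) (hpdeg : p.degree ≤ 3) (hrdeg : r.degree ≤ 1)
    (hr0 : r.eval 0 = 0)
    (hr1 : (Polynomial.derivative r).eval 0 = 0)
    (hp3 : (Polynomial.derivative (Polynomial.derivative (Polynomial.derivative p))).eval 1 = 0)
    (hp2 : (Polynomial.derivative (Polynomial.derivative p)).eval 1 = 0)
    (hp1 : ∫ x in (0:ℝ)..1, (Polynomial.derivative p).eval x = 0)
    (hp0 : ∫ x in (0:ℝ)..1, p.eval x = 0) :
    p = 0 ∧ r = 0 := by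
  have hr : r = C (r.coeff 0) + C (r.coeff 1) * X + C (r.coeff 2) * X ^ 2 + C (r.coeff 3) * X ^ 3 :=
    poly_as_sum r (hrdeg.trans (by norm_num))
  have hp : p = C (p.coeff 0) + C (p.coeff 1) * X + C (p.coeff 2) * X ^ 2 + C (p.coeff 3) * X ^ 3 :=
    poly_as_sum p hpdeg
  have hr2 : r.coeff 2 = 0 :=
    Polynomial.coeff_eq_zero_of_degree_lt (lt_of_le_of_lt hrdeg (by norm_num))
  have hr3 : r.coeff 3 = 0 :=
    Polynomial.coeff_eq_zero_of_degree_lt (lt_of_le_of_lt hrdeg (by norm_num))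
  rw [hr] at hr0 hr1
  rw [hp] at hp3 hp2 hp1 hp0
  simp [Polynomial.derivative_add, Polynomial.derivative_mul,
    Polynomial.derivative_X_pow] at hr0 hr1 hp3 hp2 hp1 hp0
  norm_num at hp3
  rw [show (1:ℝ) + 1 = 2 by norm_num, show (2:ℝ) + 1 = 3 by norm_num] at hp1
  rw [int_aux1] at hp1
  rw [int_aux0] at hp0
  have ha2 : p.coeff 2 = 0 := by linarith
  have ha1 : p.coeff 1 = 0 := by linarith
  have ha0 : p.coeff 0 = 0 := by linarith
  constructor
  · rw [hp, ha0, ha1, ha2, hp3]; simp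
  · rw [hr, hr0, hr1, hr2, hr3]; simp
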